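/- (Appell relation.) Let Δ = (𝔡₁,…,𝔡_d) be a system of delta operators on ℝ[x₁,…,x_d] with basic sequence (p_n)_{n∈ℕ^d}, let Z = (z_k)_{k∈ℕ^d} ⊆ ℝ^d be a grid, and let t_k(·;Z) be the associated delta Gončarov polynomials. In the ring of formal power series in new variables y₁,…,y_d with coefficients in ℝ[x₁,…,x_d], let G denote the series whose coefficient of yⁿ is p_n(x)/n!, and for u ∈ ℝ^d let G_u ∈ ℝ⟦y₁,…,y_d⟧ denote the series whose coefficient of yⁿ is p_n(u)/n!. Then G = ∑_{k∈ℕ^d} (t_k(x;Z)/k!)·yᵏ·G_{z_k}, where the right-hand side is the formal power series whose coefficient of yⁿ is the finite sum ∑_{k≤n} (t_k(x;Z)/k!)·(p_{n−k}(z_k)/(n−k)!). (With g the compositional inverse of the system of indicators of Δ, the left side represents e^{x·g(y)} and the right side represents ∑_k (t_k(x;Z)/k!)·yᵏ·e^{z_k·g(y)}.) -/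

import Mathlib

open MvPolynomial

noncomputable section

/-- The algebra of real polynomials in `d` variables `x₁, …, x_d`. -/
abbrev MvP (d : ℕ) := MvPolynomial (Fin d) ℝ

/-- The shift operator `E_v : p(x) ↦ p(x + v)`. -/
def shiftOp {d : ℕ} (v : Fin d → ℝ) : Module.End ℝ (MvP d) :=
  (MvPolynomial.aeval (fun i => X i + C (v i)) : MvP d →ₐ[ℝ] MvP d).toLinearMap

/-- A linear operator on `ℝ[x₁,…,x_d]` is shift-invariant if it commutes with
every shift operator. -/
def ShiftInv {d : ℕ} (L : Module.End ℝ (MvP d)) : Prop :=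
  ∀ v : Fin d → ℝ, L * shiftOp v = shiftOp v * L

/-- `(𝔡₁, …, 𝔡_d)` is a system of delta operators: each `𝔡_i` is shift-invariant,
each `𝔡_i` maps every homogeneous linear polynomial to a constant, and for a
nonzero homogeneous linear polynomial at least one `𝔡_i p` is nonzero. -/
def IsDeltaSystem {d : ℕ} (D : Fin d → Module.End ℝ (MvP d)) : Prop :=
  (∀ i, ShiftInv (D i)) ∧
  ∀ a : Fin d → ℝ,
    (∀ i, ∃ c : ℝ, D i (∑ j, C (a j) * X j) = C c) ∧
    ((∑ j, C (a j) * X j) ≠ 0 → ∃ i, D i (∑ j, C (a j) * X j) ≠ 0)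


/-- `𝔡^k = 𝔡₁^{k₁} ∘ ⋯ ∘ 𝔡_d^{k_d}`. -/
def dpow {d : ℕ} (D : Fin d → Module.End ℝ (MvP d)) (k : Fin d → ℕ) :
    Module.End ℝ (MvP d) :=
  (List.ofFn fun i => (D i) ^ (k i)).prod

/-- `(p_n)_{n ∈ ℕ^d}` is a basic sequence of the system `D`:
`deg p_n = |n|`, `p_0 = 1`, `p_n(0) = 0` for `|n| ≥ 1`, and
`𝔡_i p_n = n_i • p_{n - e_i}`. -/
def IsBasicSeq {d : ℕ} (D : Fin d → Module.End ℝ (MvP d))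
    (p : (Fin d → ℕ) → MvP d) : Prop :=
  (∀ n : Fin d → ℕ, (p n).totalDegree = ∑ i, n i) ∧
  p 0 = 1 ∧
  (∀ n : Fin d → ℕ, 1 ≤ ∑ i, n i → eval (0 : Fin d → ℝ) (p n) = 0) ∧
  ∀ (n : Fin d → ℕ) (i : Fin d), D i (p n) = (n i : ℝ) • p (n - Pi.single i 1)

/-- `Π_n(Δ)`: the span of the basic polynomials `p_k` with `k ≤ n`
(componentwise order). -/
def Pin {d : ℕ} (p : (Fin d → ℕ) → MvP d) (n : Fin d → ℕ) : Submodule ℝ (MvP d) :=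
  Submodule.span ℝ (p '' {k | k ≤ n})

/-- `n! = n₁! ⋯ n_d!` as a real number. -/
def natFact {d : ℕ} (n : Fin d → ℕ) : ℝ := ∏ i, (Nat.factorial (n i) : ℝ)

/-- `t` is the delta Gončarov polynomial `t_n(·;Z)` for the system `D` with
basic sequence `p` and grid `Z`: `t ∈ Π_n(Δ)` and
`(𝔡^k t)(z_k) = n!·δ_{k,n}` for all `k ≤ n`. -/
def IsGoncarov {d : ℕ} (D : Fin d → Module.End ℝ (MvP d))
    (p : (Fin d → ℕ) → MvP d) (Z : (Fin d → ℕ) → (Fin d → ℝ))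
    (n : Fin d → ℕ) (t : MvP d) : Prop :=
  t ∈ Pin p n ∧
  ∀ k ≤ n, eval (Z k) (dpow D k t) = if k = n then natFact n else 0

section Aux
variable {d : ℕ} {D : Fin d → Module.End ℝ (MvP d)} {p : (Fin d → ℕ) → MvP d}

lemma descFactorial_succ' (n m : ℕ) : n.descFactorial (m+1) = n * (n-1).descFactorial m := by
  cases n with
  | zero => simp [Nat.zero_descFactorial_succ]
  | succ k => rw [Nat.succ_descFactorial_succ]; simp

lemma basic_pow_apply (hp : IsBasicSeq D p) (i : Fin d) (m : ℕ) (n : Fin d → ℕ) :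
    (D i ^ m) (p n) = ((n i).descFactorial m : ℝ) • p (n - Pi.single i m) := by
  induction m generalizing n with
  | zero => simp
  | succ m ih =>
    rw [pow_succ]
    have h : (D i ^ m * D i) (p n) = (D i ^ m) (D i (p n)) := rfl
    rw [h, hp.2.2.2 n i, map_smul, ih]
    have h2 : n - Pi.single i 1 - Pi.single i m = n - (Pi.single i (m+1) : Fin d → ℕ) := by
      funext x
      show n x - (Pi.single i 1 : Fin d → ℕ) x - (Pi.single i m : Fin d → ℕ) x
          = n x - (Pi.single i (m+1) : Fin d → ℕ) x
      by_cases hx : x = i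
      · subst hx; simp; omega
      · simp [Pi.single_apply, hx]
    have h1 : (n - Pi.single i 1 : Fin d → ℕ) i = n i - 1 := by simp
    rw [h1, h2, smul_smul, descFactorial_succ' (n i) m, Nat.cast_mul]

lemma list_apply (hp : IsBasicSeq D p) (k : Fin d → ℕ) :
    ∀ (l : List (Fin d)), l.Nodup → ∀ n : Fin d → ℕ,
      (l.map fun i => D i ^ k i).prod (p n) =
        (l.map fun i => ((n i).descFactorial (k i) : ℝ)).prod •
          p (n - fun x => if x ∈ l then k x else 0) := by
  intro l
  induction l with
  | nil =>
    intro _ n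
    have hz : (n - fun _ : Fin d => (0:ℕ)) = n := by funext x; simp [Pi.sub_apply]
    simp [hz]
  | cons i l ih =>
    intro hnd n
    have hi : i ∉ l := (List.nodup_cons.1 hnd).1
    have hl : l.Nodup := (List.nodup_cons.1 hnd).2
    rw [List.map_cons, List.prod_cons]
    have h : ((D i ^ k i) * (l.map fun j => D j ^ k j).prod) (p n)
        = (D i ^ k i) ((l.map fun j => D j ^ k j).prod (p n)) := rfl
    rw [h, ih hl n, map_smul, basic_pow_apply hp]
    have hni : (n - fun x => if x ∈ l then k x else 0) i = n i := by simp [hi]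
    have hsub : (n - fun x => if x ∈ l then k x else 0) - Pi.single i (k i)
        = n - fun x => if x ∈ (i :: l) then k x else 0 := by
      funext x
      by_cases hx : x = i
      · subst hx; simp [hi]
      · simp [hx, Pi.single_apply, List.mem_cons]
    rw [hni, hsub, List.map_cons, List.prod_cons, smul_smul, mul_comm]

lemma dpow_apply (hp : IsBasicSeq D p) (k n : Fin d → ℕ) :
    dpow D k (p n) = (∏ i, ((n i).descFactorial (k i) : ℝ)) • p (n - k) := by
  rw [dpow, List.ofFn_eq_map, list_apply hp k _ (List.nodup_finRange d) n]
  have h1 : (List.map (fun i => ((n i).descFactorial (k i) : ℝ)) (List.finRange d)).prod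
      = ∏ i, ((n i).descFactorial (k i) : ℝ) := by
    rw [← List.ofFn_eq_map, List.prod_ofFn]
  have h2 : (n - fun x => if x ∈ List.finRange d then k x else 0) = n - k := by
    funext x
    simp [List.mem_finRange]
  rw [h1, h2]

lemma coeff_zero_of_not_le {k n : Fin d → ℕ} (h : ¬ k ≤ n) :
    (∏ i, ((n i).descFactorial (k i) : ℝ)) = 0 := by
  obtain ⟨i, hi⟩ : ∃ i, n i < k i := by
    by_contra hc
    push_neg at hc
    exact h fun i => hc i
  exact Finset.prod_eq_zero (Finset.mem_univ i)
    (by exact_mod_cast congrArg (Nat.cast : ℕ → ℝ) (Nat.descFactorial_eq_zero_iff_lt.2 hi))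

lemma natFact_pos (n : Fin d → ℕ) : 0 < natFact n :=
  Finset.prod_pos fun i _ => by exact_mod_cast Nat.factorial_pos (n i)

lemma natFact_ne_zero (n : Fin d → ℕ) : natFact n ≠ 0 := ne_of_gt (natFact_pos n)

lemma dpow_self_coeff (n : Fin d → ℕ) :
    (∏ i, ((n i).descFactorial (n i) : ℝ)) = natFact n := by
  rw [natFact]
  exact Finset.prod_congr rfl fun i _ => by rw [Nat.descFactorial_self]

lemma sub_self_eq_zero' (n : Fin d → ℕ) : n - n = 0 := by
  funext x; simp

lemma p_inj (hp : IsBasicSeq D p) : Function.Injective p := by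
  intro a b hab
  by_contra hne
  have h1 : eval (0 : Fin d → ℝ) (dpow D a (p a)) = natFact a := by
    rw [dpow_apply hp, smul_eval, dpow_self_coeff, sub_self_eq_zero', hp.2.1]
    simp
  have h2 : eval (0 : Fin d → ℝ) (dpow D a (p b)) = 0 := by
    rw [dpow_apply hp, smul_eval]
    by_cases hab' : a ≤ b
    · have hsum : 1 ≤ ∑ i, (b - a) i := by
        obtain ⟨i, hi⟩ : ∃ i, a i < b i := by
          by_contra hc
          push_neg at hc
          exact hne (le_antisymm hab' fun i => hc i)
        calc 1 ≤ (b - a) i := by simp [Pi.sub_apply]; omega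
        _ ≤ ∑ i, (b - a) i := Finset.single_le_sum (fun j _ => Nat.zero_le _) (Finset.mem_univ i)
      rw [hp.2.2.1 _ hsum, mul_zero]
    · rw [coeff_zero_of_not_le hab', zero_mul]
  rw [hab, h2] at h1
  exact natFact_ne_zero a h1.symm

lemma mem_Pin_rep (hp : IsBasicSeq D p) (n : Fin d → ℕ) (q : MvP d) (hq : q ∈ Pin p n) :
    ∃ b : (Fin d → ℕ) → ℝ, q = ∑ m ∈ Finset.Iic n, b m • p m := by
  rw [Pin] at hq
  have himg : p '' {k | k ≤ n} = ↑((Finset.Iic n).image p) := by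
    ext x
    simp [Finset.mem_Iic, Set.mem_image]
  rw [himg] at hq
  obtain ⟨f, -, hf⟩ := Submodule.mem_span_finset.1 hq
  refine ⟨fun m => f (p m), ?_⟩
  rw [← hf, Finset.sum_image (fun x _ y _ hxy => p_inj hp hxy)]

lemma dpow_zero_of_not_le (hp : IsBasicSeq D p) {j k : Fin d → ℕ} (hjk : ¬ j ≤ k)
    {q : MvP d} (hq : q ∈ Pin p k) : dpow D j q = 0 := by
  induction hq using Submodule.span_induction with
  | mem x hx =>
    obtain ⟨m, hm, rfl⟩ := hx
    rw [dpow_apply hp]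
    have : ¬ j ≤ m := fun h => hjk (h.trans hm)
    rw [coeff_zero_of_not_le this, zero_smul]
  | zero => simp
  | add x y _ _ hx hy => rw [map_add, hx, hy, add_zero]
  | smul c x _ hx => rw [map_smul, hx, smul_zero]

lemma measure_lt {n m m' : Fin d → ℕ} (hm' : m' ≤ n) (hle : m ≤ m') (hne : m' ≠ m) :
    ∑ i, (n i - m' i) < ∑ i, (n i - m i) := by
  rw [Pi.le_def] at hm' hle
  obtain ⟨i, hi⟩ : ∃ i, m i < m' i := by
    by_contra hc
    push_neg at hc
    exact hne (le_antisymm (fun i => hc i) hle)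
  refine Finset.sum_lt_sum (fun j _ => Nat.sub_le_sub_left (hle j) (n j))
    ⟨i, Finset.mem_univ i, ?_⟩
  have h1 := hm' i
  omega

lemma coeffs_zero_of_functionals_zero (hp : IsBasicSeq D p) (Z : (Fin d → ℕ) → (Fin d → ℝ))
    (n : Fin d → ℕ) (b : (Fin d → ℕ) → ℝ)
    (hb : ∀ j ≤ n, eval (Z j) (dpow D j (∑ m ∈ Finset.Iic n, b m • p m)) = 0) :
    ∀ m ≤ n, b m = 0 := by
  have key : ∀ N : ℕ, ∀ m, m ≤ n → (∑ i, (n i - m i)) < N → b m = 0 := by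
    intro N
    induction N with
    | zero => intro m _ h; omega
    | succ N ih =>
      intro m hm hlt
      have h0 := hb m hm
      rw [map_sum, map_sum] at h0
      have hterm : ∀ m' ∈ Finset.Iic n, m' ≠ m →
          eval (Z m) (dpow D m (b m' • p m')) = 0 := by
        intro m' hm'n hne
        rw [map_smul, smul_eval, dpow_apply hp, smul_eval]
        by_cases hle : m ≤ m'
        · have : b m' = 0 := by
            apply ih m' (Finset.mem_Iic.1 hm'n)
            have := measure_lt (Finset.mem_Iic.1 hm'n) hle hne
            omega
          rw [this, zero_mul]
        · rw [coeff_zero_of_not_le hle, zero_mul, mul_zero]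
      rw [Finset.sum_eq_single m hterm (fun h => absurd (Finset.mem_Iic.2 hm) h)] at h0
      rw [map_smul, smul_eval, dpow_apply hp, smul_eval, dpow_self_coeff,
        sub_self_eq_zero', hp.2.1, map_one, mul_one] at h0
      rcases mul_eq_zero.1 h0 with h | h
      · exact h
      · exact absurd h (natFact_ne_zero m)
  intro m hm
  exact key (∑ i, (n i - m i) + 1) m hm (Nat.lt_succ_self _)

lemma natFact_sub_mul (j n : Fin d → ℕ) (hj : j ≤ n) :
    (∏ i, ((n i).descFactorial (j i) : ℝ)) * natFact (n - j) = natFact n := by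
  rw [natFact, natFact, ← Finset.prod_mul_distrib]
  refine Finset.prod_congr rfl fun i _ => ?_
  have : (n - j) i = n i - j i := rfl
  rw [this, ← Nat.cast_mul, mul_comm ((n i).descFactorial (j i)),
    Nat.factorial_mul_descFactorial (hj i)]

end Aux

/-- Appell relation: as formal power series in `y₁,…,y_d` with
coefficients in `ℝ[x₁,…,x_d]`, the series `G` with coefficient `p_n(x)/n!` of `yⁿ`
equals `∑_k (t_k(x;Z)/k!)·yᵏ·G_{z_k}`; equivalently, for every `n` the coefficient
of `yⁿ` on the two sides agree:
`p_n(x)/n! = ∑_{k ≤ n} (p_{n-k}(z_k)/(k!·(n-k)!)) · t_k(x;Z)`. -/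
theorem appell_relation {d : ℕ} (hd : 1 ≤ d)
    (D : Fin d → Module.End ℝ (MvP d)) (hD : IsDeltaSystem D)
    (p : (Fin d → ℕ) → MvP d) (hp : IsBasicSeq D p)
    (Z : (Fin d → ℕ) → (Fin d → ℝ))
    (t : (Fin d → ℕ) → MvP d) (ht : ∀ k, IsGoncarov D p Z k (t k)) :
    ∀ n : Fin d → ℕ,
      (natFact n)⁻¹ • p n =
        ∑ k ∈ Finset.Iic n,
          (eval (Z k) (p (n - k)) / (natFact k * natFact (n - k))) • t k := by
  intro n
  set c : (Fin d → ℕ) → ℝ :=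
    fun k => eval (Z k) (p (n - k)) / (natFact k * natFact (n - k)) with hc
  set r : MvP d := (natFact n)⁻¹ • p n - ∑ k ∈ Finset.Iic n, c k • t k with hr
  suffices hz : r = 0 by
    have := sub_eq_zero.1 hz
    exact this
  -- r ∈ Pin p n
  have hrmem : r ∈ Pin p n := by
    apply Submodule.sub_mem
    · exact Submodule.smul_mem _ _ (Submodule.subset_span ⟨n, le_refl n, rfl⟩)
    · apply Submodule.sum_mem
      intro k hk
      apply Submodule.smul_mem
      have hsub : Pin p k ≤ Pin p n :=
        Submodule.span_mono (Set.image_mono fun x hx => hx.trans (Finset.mem_Iic.1 hk))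
      exact hsub (ht k).1
  -- the Gončarov functionals vanish on r
  have hφ : ∀ j ≤ n, eval (Z j) (dpow D j r) = 0 := by
    intro j hj
    rw [hr, map_sub, map_smul, map_sum, map_sub, smul_eval, map_sum]
    have hsum : ∑ k ∈ Finset.Iic n, eval (Z j) (dpow D j (c k • t k)) = c j * natFact j := by
      rw [Finset.sum_eq_single j]
      · rw [map_smul, smul_eval, (ht j).2 j (le_refl j), if_pos rfl]
      · intro k hk hne
        rw [map_smul, smul_eval]
        by_cases hjk : j ≤ k
        · rw [(ht k).2 j hjk, if_neg (fun h => hne h.symm), mul_zero]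
        · rw [dpow_zero_of_not_le hp hjk (ht k).1, map_zero, mul_zero]
      · intro h
        exact absurd (Finset.mem_Iic.2 hj) h
    rw [hsum, dpow_apply hp, smul_eval]
    have hA := natFact_sub_mul j n hj
    have hj' : c j = eval (Z j) (p (n - j)) / (natFact j * natFact (n - j)) := rfl
    rw [hj']
    have h1 : natFact j ≠ 0 := natFact_ne_zero j
    have h2 : natFact (n - j) ≠ 0 := natFact_ne_zero (n - j)
    have h3 : natFact n ≠ 0 := natFact_ne_zero n
    have hA0 : (∏ i, ((n i).descFactorial (j i) : ℝ)) ≠ 0 := by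
      intro h0
      rw [h0, zero_mul] at hA
      exact h3 hA.symm
    rw [← hA]
    field_simp
    ring
  obtain ⟨b, hb⟩ := mem_Pin_rep hp n r hrmem
  have hb0 : ∀ m ≤ n, b m = 0 := by
    apply coeffs_zero_of_functionals_zero hp Z n b
    intro j hj
    rw [← hb]
    exact hφ j hj
  rw [hb]
  apply Finset.sum_eq_zero
  intro m hm
  rw [hb0 m (Finset.mem_Iic.1 hm), zero_smul]

end
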